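/- The full IQF quantile function, obtained by gluing the left exponential extrapolation on (0, α₁], the piecewise-linear interpolation on [α₁, α_K], and the right exponential extrapolation on [α_K, 1), is monotone nondecreasing on all of (0,1), assuming the knot values v_1 < v_2 ≤ … ≤ v_{K−1} < v_K are nondecreasing with strict inequalities at both extremal pairs, and the tail parameters are chosen so that the pieces agree at the gluing points α₁ and α_K. Hence IQF never exhibits quantile crossing: α ≤ α' implies q(α) ≤ q(α'). -/

import Mathlib

open Set

lemma glue_mono {f : ℝ → ℝ} {A B C : ℝ} (h1 : MonotoneOn f (Icc A B))
    (h2 : MonotoneOn f (Icc B C)) (hAB : A ≤ B) (hBC : B ≤ C) :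
    MonotoneOn f (Icc A C) := by
  intro x hx y hy hxy
  rcases le_total y B with h | h
  · exact h1 ⟨hx.1, hxy.trans h⟩ ⟨hy.1, h⟩ hxy
  · rcases le_total x B with h' | h'
    · exact (h1 ⟨hx.1, h'⟩ ⟨hAB, le_refl B⟩ h').trans
        (h2 ⟨le_refl B, hBC⟩ ⟨h, hy.2⟩ h)
    · exact h2 ⟨h', hx.2⟩ ⟨h'.trans hxy, hy.2⟩ hxy

/-- The full IQF quantile function (exponential left tail, piecewise-linear middle,
exponential right tail) is monotone nondecreasing on (0,1): no quantile crossing. -/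
theorem iqf_no_quantile_crossing (n : ℕ) (hn : 1 ≤ n)
    (a : Fin (n + 1) → ℝ) (ha : StrictMono a)
    (ha0 : 0 < a 0) (halast : a (Fin.last n) < 1)
    (v : Fin (n + 1) → ℝ) (hv : Monotone v)
    (hv01 : v 0 < v 1)
    (hvlast : v ⟨n - 1, by omega⟩ < v (Fin.last n))
    (βL βR : ℝ)
    (hβL : βL = Real.log (a 1 / a 0) / (v 1 - v 0))
    (hβR : βR = Real.log ((1 - a ⟨n - 1, by omega⟩) / (1 - a (Fin.last n)))
                  / (v (Fin.last n) - v ⟨n - 1, by omega⟩))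
    (q : ℝ → ℝ)
    (hleft : ∀ x ∈ Set.Ioc (0:ℝ) (a 0),
      q x = (1 / βL) * Real.log (x / a 1) + v 1)
    (hmid : ∀ k : Fin n, ∀ x ∈ Set.Icc (a k.castSucc) (a k.succ),
      q x = ((a k.succ - x) * v k.castSucc + (x - a k.castSucc) * v k.succ)
              / (a k.succ - a k.castSucc))
    (hright : ∀ x ∈ Set.Ico (a (Fin.last n)) (1:ℝ),
      q x = (1 / βR) * Real.log ((1 - a ⟨n - 1, by omega⟩) / (1 - x))
              + v ⟨n - 1, by omega⟩) :
    MonotoneOn q (Set.Ioo (0:ℝ) 1) := by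
  -- basic facts
  have h01 : (0 : Fin (n+1)) < 1 := by
    rw [Fin.lt_iff_val_lt_val, Fin.val_zero, Fin.val_one']
    have : 1 % (n+1) = 1 := Nat.mod_eq_of_lt (by omega)
    omega
  have ha1 : 0 < a 1 := ha0.trans (ha h01)
  set m : Fin (n+1) := ⟨n - 1, by omega⟩ with hm
  have hmlast : m < Fin.last n := by
    rw [Fin.lt_iff_val_lt_val]
    simp [hm, Fin.last]
    omega
  have haml : a m < a (Fin.last n) := ha hmlast
  have h1am : 0 < 1 - a m := by linarith
  have h1al : 0 < 1 - a (Fin.last n) := by linarith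
  -- positivity of β's
  have hβLpos : 0 < βL := by
    rw [hβL]
    apply div_pos
    · apply Real.log_pos
      rw [one_lt_div ha0]
      exact ha h01
    · linarith
  have hβRpos : 0 < βR := by
    rw [hβR]
    apply div_pos
    · apply Real.log_pos
      rw [one_lt_div h1al]
      linarith
    · linarith
  -- monotone on left tail
  have leftMono : MonotoneOn q (Ioc 0 (a 0)) := by
    intro x hx y hy hxy
    have hx0 : 0 < x := hx.1
    rw [hleft x hx, hleft y hy]
    have hlog : Real.log (x / a 1) ≤ Real.log (y / a 1) := by
      apply Real.log_le_log (by positivity)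
      gcongr
    have := mul_le_mul_of_nonneg_left hlog (le_of_lt (one_div_pos.2 hβLpos))
    linarith
  -- monotone on right tail
  have rightMono : MonotoneOn q (Ico (a (Fin.last n)) 1) := by
    intro x hx y hy hxy
    rw [hright x hx, hright y hy]
    have h1x : 0 < 1 - x := by have := hx.2; linarith
    have h1y : 0 < 1 - y := by have := hy.2; linarith
    have hlog : Real.log ((1 - a m) / (1 - x)) ≤ Real.log ((1 - a m) / (1 - y)) := by
      apply Real.log_le_log (by positivity)
      gcongr
    have := mul_le_mul_of_nonneg_left hlog (le_of_lt (one_div_pos.2 hβRpos))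
    linarith
  -- monotone on each middle piece
  have pieceMono : ∀ k : Fin n, MonotoneOn q (Icc (a k.castSucc) (a k.succ)) := by
    intro k x hx y hy hxy
    have hd : 0 < a k.succ - a k.castSucc :=
      sub_pos.2 (ha (Fin.castSucc_lt_succ (i := k)))
    have hvk : v k.castSucc ≤ v k.succ := hv (Fin.castSucc_lt_succ (i := k)).le
    rw [hmid k x hx, hmid k y hy, div_le_div_iff₀ hd hd]
    nlinarith [mul_nonneg (mul_nonneg (sub_nonneg.2 hxy) (sub_nonneg.2 hvk)) hd.le]
  -- monotone on middle part
  have midMono : ∀ i : Fin (n+1), MonotoneOn q (Icc (a 0) (a i)) := by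
    intro i
    induction i using Fin.induction with
    | zero =>
      intro x hx y hy _
      have hx' : x = a 0 := le_antisymm hx.2 hx.1
      have hy' : y = a 0 := le_antisymm hy.2 hy.1
      rw [hx', hy']
    | succ k ih =>
      exact glue_mono ih (pieceMono k) (ha.monotone (Fin.zero_le _))
        (ha (Fin.castSucc_lt_succ (i := k))).le
  have midMono' := midMono (Fin.last n)
  have hPQ : a 0 ≤ a (Fin.last n) := ha.monotone (Fin.zero_le _)
  -- membership helpers
  have ma0l : a 0 ∈ Ioc (0:ℝ) (a 0) := ⟨ha0, le_refl _⟩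
  have ma0m : a 0 ∈ Icc (a 0) (a (Fin.last n)) := ⟨le_refl _, hPQ⟩
  have malm : a (Fin.last n) ∈ Icc (a 0) (a (Fin.last n)) := ⟨hPQ, le_refl _⟩
  have malr : a (Fin.last n) ∈ Ico (a (Fin.last n)) (1:ℝ) := ⟨le_refl _, halast⟩
  -- assemble
  intro x hx y hy hxy
  have hx0 : 0 < x := hx.1
  have hy1 : y < 1 := hy.2
  rcases le_or_gt y (a 0) with hyP | hyP
  · exact leftMono ⟨hx0, hxy.trans hyP⟩ ⟨hy.1, hyP⟩ hxy
  · have step2 : ∀ z, a 0 ≤ z → z ≤ y → z < 1 → q z ≤ q y := by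
      intro z hz1 hz2 hz3
      rcases le_or_gt y (a (Fin.last n)) with hyQ | hyQ
      · exact midMono' ⟨hz1, hz2.trans hyQ⟩ ⟨hyP.le, hyQ⟩ hz2
      · rcases le_or_gt z (a (Fin.last n)) with hzQ | hzQ
        · exact (midMono' ⟨hz1, hzQ⟩ malm hzQ).trans
            (rightMono malr ⟨hyQ.le, hy1⟩ hyQ.le)
        · exact rightMono ⟨hzQ.le, hz3⟩ ⟨(hzQ.trans_le hz2).le.trans (le_refl _), hy1⟩ hz2
    rcases le_or_gt x (a 0) with hxP | hxP
    · have h1 : q x ≤ q (a 0) := leftMono ⟨hx0, hxP⟩ ma0l hxP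
      exact h1.trans (step2 (a 0) (le_refl _) hyP.le (lt_of_le_of_lt hPQ halast))
    · exact step2 x hxP.le hxy (hx.2)
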